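/- There exists c > 0 such that for all sufficiently large n there is a permutation of [n] containing no weak twins of length greater than n/2 - c·n^{1/3}. Hence wt(n) ≤ n/2 - Ω(n^{1/3}). -/

import Mathlib

namespace WT

abbrev Run : Type := ℕ × ℕ × ℕ

def lU (e : Run) : ℕ := e.1
def lV (e : Run) : ℕ := e.2.1
def lL (e : Run) : ℕ := e.2.2

def loadU (L : List Run) (j : ℕ) : ℕ := (L.map (fun e => if lU e = j then lL e else 0)).sum
def loadV (L : List Run) (j : ℕ) : ℕ := (L.map (fun e => if lV e = j then lL e else 0)).sum
def tot (L : List Run) : ℕ := (L.map lL).sum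
def used (L : List Run) : Finset ℕ := (L.map lU).toFinset ∪ (L.map lV).toFinset

@[simp] lemma loadU_append (X Y : List Run) (j : ℕ) :
    loadU (X ++ Y) j = loadU X j + loadU Y j := by simp [loadU]
@[simp] lemma loadV_append (X Y : List Run) (j : ℕ) :
    loadV (X ++ Y) j = loadV X j + loadV Y j := by simp [loadV]
@[simp] lemma loadU_cons (e : Run) (Y : List Run) (j : ℕ) :
    loadU (e :: Y) j = (if lU e = j then lL e else 0) + loadU Y j := by simp [loadU]
@[simp] lemma loadV_cons (e : Run) (Y : List Run) (j : ℕ) :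
    loadV (e :: Y) j = (if lV e = j then lL e else 0) + loadV Y j := by simp [loadV]
@[simp] lemma loadU_nil (j : ℕ) : loadU [] j = 0 := rfl
@[simp] lemma loadV_nil (j : ℕ) : loadV [] j = 0 := rfl
@[simp] lemma tot_append (X Y : List Run) : tot (X ++ Y) = tot X + tot Y := by simp [tot]
@[simp] lemma tot_cons (e : Run) (Y : List Run) : tot (e :: Y) = lL e + tot Y := by simp [tot]
@[simp] lemma tot_nil : tot [] = 0 := rfl
@[simp] lemma used_nil : used [] = ∅ := rfl

lemma mem_used_iff (L : List Run) (j : ℕ) :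
    j ∈ used L ↔ ∃ e ∈ L, lU e = j ∨ lV e = j := by
  simp only [used, Finset.mem_union, List.mem_toFinset, List.mem_map]
  constructor
  · rintro (⟨e, he, rfl⟩ | ⟨e, he, rfl⟩)
    exacts [⟨e, he, Or.inl rfl⟩, ⟨e, he, Or.inr rfl⟩]
  · rintro ⟨e, he, rfl | rfl⟩
    exacts [Or.inl ⟨e, he, rfl⟩, Or.inr ⟨e, he, rfl⟩]

lemma extend (c : ℕ → ℕ) (hc : ∀ j, 1 ≤ c j) {X Y : Finset ℕ} (hXY : X ⊆ Y) (T : ℕ)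
    (h : 2 * T + X.card ≤ ∑ j ∈ X, c j) : 2 * T + Y.card ≤ ∑ j ∈ Y, c j := by
  have h1 : ∑ j ∈ Y \ X, c j + ∑ j ∈ X, c j = ∑ j ∈ Y, c j := Finset.sum_sdiff hXY
  have h2 : (Y \ X).card + X.card = Y.card := Finset.card_sdiff_add_card_eq_card hXY
  have h3 : (Y \ X).card ≤ ∑ j ∈ Y \ X, c j := by
    rw [Finset.card_eq_sum_ones]
    exact Finset.sum_le_sum (fun j _ => hc j)
  omega

lemma single_le_loadU {L : List Run} {e : Run} (he : e ∈ L) : lL e ≤ loadU L (lU e) := by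
  induction L with
  | nil => simp at he
  | cons f t ih =>
    rcases List.mem_cons.mp he with rfl | h
    · simp
    · have := ih h
      simp only [loadU_cons]
      omega

lemma single_le_loadV {L : List Run} {e : Run} (he : e ∈ L) : lL e ≤ loadV L (lV e) := by
  induction L with
  | nil => simp at he
  | cons f t ih =>
    rcases List.mem_cons.mp he with rfl | h
    · simp
    · have := ih h
      simp only [loadV_cons]
      omega

theorem key_aux (c : ℕ → ℕ) (hmono : StrictMono c) (hodd : ∀ j, c j % 2 = 1) :
    ∀ N (L : List Run), L.length ≤ N →
    L.Pairwise (fun x y => lU x < lU y) → L.Pairwise (fun x y => lV x < lV y) →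
    (∀ j, loadU L j + loadV L j ≤ c j) →
    2 * tot L + (used L).card ≤ ∑ j ∈ used L, c j := by
  intro N
  induction N with
  | zero =>
    intro L hlen _ _ _
    have : L = [] := List.length_eq_zero_iff.mp (Nat.le_zero.mp hlen)
    subst this; simp
  | succ N ih =>
    intro L hlen hu hv hcap
    rcases List.eq_nil_or_concat L with rfl | ⟨M, e, rfl⟩
    · simp
    rw [List.concat_eq_append] at *
    obtain ⟨huM, -, huMe⟩ := List.pairwise_append.mp hu
    obtain ⟨hvM, -, hvMe⟩ := List.pairwise_append.mp hv
    have huMe' : ∀ x ∈ M, lU x < lU e := fun x hx => huMe x hx e (by simp)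
    have hvMe' : ∀ x ∈ M, lV x < lV e := fun x hx => hvMe x hx e (by simp)
    have hlenM : M.length ≤ N := by simp at hlen; omega
    have hc1 : ∀ j, 1 ≤ c j := fun j => by have := hodd j; omega
    have hcapM : ∀ j, loadU M j + loadV M j ≤ c j := fun j => by
      have := hcap j
      simp only [loadU_append, loadV_append, loadU_cons, loadV_cons, loadU_nil,
        loadV_nil] at this
      omega
    have hmemU : ∀ j, j ∈ used (M ++ [e]) ↔ j = lU e ∨ j = lV e ∨ j ∈ used M := by
      intro j
      simp only [mem_used_iff, List.mem_append, List.mem_singleton]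
      constructor
      · rintro ⟨f, hf | rfl, hor⟩
        · exact Or.inr (Or.inr ⟨f, hf, hor⟩)
        · rcases hor with h | h
          · exact Or.inl h.symm
          · exact Or.inr (Or.inl h.symm)
      · rintro (rfl | rfl | hj)
        · exact ⟨e, Or.inr rfl, Or.inl rfl⟩
        · exact ⟨e, Or.inr rfl, Or.inr rfl⟩
        · obtain ⟨f, hf, hor⟩ := hj
          exact ⟨f, Or.inl hf, hor⟩
    have heL : lL e ≤ loadU (M ++ [e]) (lU e) := single_le_loadU (by simp)
    have heLV : lL e ≤ loadV (M ++ [e]) (lV e) := single_le_loadV (by simp)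
    rcases lt_trichotomy (lU e) (lV e) with hlt | heq | hgt
    · -- case lU e < lV e
      by_cases hs : ∃ s ∈ M, lV s = lU e
      · obtain ⟨s, hsM, hsv⟩ := hs
        obtain ⟨M1, M2, rfl⟩ := List.append_of_mem hsM
        obtain ⟨pv1, pv2c, hv12⟩ := List.pairwise_append.mp hvM
        obtain ⟨hsM2, pv2⟩ := List.pairwise_cons.mp pv2c
        have hsub : (M1 ++ M2).Sublist (M1 ++ s :: M2) :=
          (List.sublist_cons_self s M2).append_left M1
        have pu' := List.Pairwise.sublist hsub huM
        have pv' := List.Pairwise.sublist hsub hvM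
        have hlen' : (M1 ++ M2).length ≤ N := by
          have := hlenM; simp at this ⊢; omega
        have hcap' : ∀ j, loadU (M1 ++ M2) j + loadV (M1 ++ M2) j ≤ c j := fun j => by
          have := hcap j
          simp only [loadU_append, loadV_append, loadU_cons, loadV_cons, loadU_nil,
            loadV_nil] at this ⊢
          omega
        have ihL' := ih (M1 ++ M2) hlen' pu' pv' hcap'
        -- capacity at block lU e
        have hsL : lL s ≤ loadV ((M1 ++ s :: M2) ++ [e]) (lU e) := by
          rw [← hsv]; exact single_le_loadV (by simp)
        have hse : lL s + lL e ≤ c (lU e) := by have := hcap (lU e); omega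
        have hgap : c (lU e) + 2 ≤ c (lV e) := by
          have h1 := hmono hlt
          have h2 := hodd (lU e); have h3 := hodd (lV e); omega
        -- freshness
        have hnotin1 : lV e ∉ used (M1 ++ M2) := by
          rw [mem_used_iff]
          rintro ⟨f, hf, h | h⟩
          · have hfM : f ∈ M1 ++ s :: M2 := hsub.mem hf
            have := huMe' f hfM; omega
          · have hfM : f ∈ M1 ++ s :: M2 := hsub.mem hf
            have := hvMe' f hfM; omega
        have hnotin2 : lU e ∉ used (M1 ++ M2) := by
          rw [mem_used_iff]
          rintro ⟨f, hf, h | h⟩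
          · have hfM : f ∈ M1 ++ s :: M2 := hsub.mem hf
            have := huMe' f hfM; omega
          · rcases List.mem_append.mp hf with h1 | h2
            · have := hv12 f h1 s (by simp); omega
            · have := hsM2 f h2; omega
        have hne : lU e ≠ lV e := ne_of_lt hlt
        set X : Finset ℕ := insert (lU e) (insert (lV e) (used (M1 ++ M2))) with hX
        have hXsub : X ⊆ used ((M1 ++ s :: M2) ++ [e]) := by
          intro j hj
          rw [hmemU j]
          simp only [hX, Finset.mem_insert] at hj
          rcases hj with rfl | rfl | hj
          · exact Or.inl rfl
          · exact Or.inr (Or.inl rfl)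
          · right; right
            rw [mem_used_iff] at hj ⊢
            obtain ⟨f, hf, hor⟩ := hj
            exact ⟨f, hsub.mem hf, hor⟩
        have hcardX : X.card = 2 + (used (M1 ++ M2)).card := by
          rw [Finset.card_insert_of_notMem (by simp [hne, hnotin2]),
            Finset.card_insert_of_notMem hnotin1]
          omega
        have hsumX : ∑ j ∈ X, c j = c (lU e) + (c (lV e) + ∑ j ∈ used (M1 ++ M2), c j) := by
          rw [Finset.sum_insert (by simp [hne, hnotin2]), Finset.sum_insert hnotin1]
        have htot : tot ((M1 ++ s :: M2) ++ [e]) = tot (M1 ++ M2) + lL s + lL e := by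
          simp; omega
        apply extend c hc1 hXsub
        rw [hcardX, hsumX, htot]
        omega
      · push_neg at hs
        have hse : lL e ≤ c (lU e) := by have := hcap (lU e); omega
        have hgap : c (lU e) + 2 ≤ c (lV e) := by
          have h1 := hmono hlt
          have h2 := hodd (lU e); have h3 := hodd (lV e); omega
        have ihM := ih M hlenM huM hvM hcapM
        have hnotin1 : lV e ∉ used M := by
          rw [mem_used_iff]
          rintro ⟨f, hf, h | h⟩
          · have := huMe' f hf; omega
          · have := hvMe' f hf; omega
        have hnotin2 : lU e ∉ used M := by
          rw [mem_used_iff]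
          rintro ⟨f, hf, h | h⟩
          · have := huMe' f hf; omega
          · exact hs f hf h
        have hne : lU e ≠ lV e := ne_of_lt hlt
        set X : Finset ℕ := insert (lU e) (insert (lV e) (used M)) with hX
        have hXsub : X ⊆ used (M ++ [e]) := by
          intro j hj
          rw [hmemU j]
          simp only [hX, Finset.mem_insert] at hj
          tauto
        have hcardX : X.card = 2 + (used M).card := by
          rw [Finset.card_insert_of_notMem (by simp [hne, hnotin2]),
            Finset.card_insert_of_notMem hnotin1]
          omega
        have hsumX : ∑ j ∈ X, c j = c (lU e) + (c (lV e) + ∑ j ∈ used M, c j) := by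
          rw [Finset.sum_insert (by simp [hne, hnotin2]), Finset.sum_insert hnotin1]
        have htot : tot (M ++ [e]) = tot M + lL e := by simp
        apply extend c hc1 hXsub
        rw [hcardX, hsumX, htot]
        omega
    · -- loop case
      have h2l : 2 * lL e + 1 ≤ c (lU e) := by
        have := hcap (lU e)
        have := hodd (lU e)
        rw [← heq] at heLV
        omega
      have ihM := ih M hlenM huM hvM hcapM
      have hnotin : lU e ∉ used M := by
        rw [mem_used_iff]
        rintro ⟨f, hf, h | h⟩
        · have := huMe' f hf; omega
        · have := hvMe' f hf; omega
      set X : Finset ℕ := insert (lU e) (used M) with hX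
      have hXsub : X ⊆ used (M ++ [e]) := by
        intro j hj
        rw [hmemU j]
        simp only [hX, Finset.mem_insert] at hj
        tauto
      have hcardX : X.card = 1 + (used M).card := by
        rw [Finset.card_insert_of_notMem hnotin]; omega
      have hsumX : ∑ j ∈ X, c j = c (lU e) + ∑ j ∈ used M, c j :=
        Finset.sum_insert hnotin
      have htot : tot (M ++ [e]) = tot M + lL e := by simp
      apply extend c hc1 hXsub
      rw [hcardX, hsumX, htot]
      omega
    · -- case lV e < lU e (mirror)
      by_cases hs : ∃ s ∈ M, lU s = lV e
      · obtain ⟨s, hsM, hsv⟩ := hs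
        obtain ⟨M1, M2, rfl⟩ := List.append_of_mem hsM
        obtain ⟨pu1, pu2c, hu12⟩ := List.pairwise_append.mp huM
        obtain ⟨hsM2, pu2⟩ := List.pairwise_cons.mp pu2c
        have hsub : (M1 ++ M2).Sublist (M1 ++ s :: M2) :=
          (List.sublist_cons_self s M2).append_left M1
        have pu' := List.Pairwise.sublist hsub huM
        have pv' := List.Pairwise.sublist hsub hvM
        have hlen' : (M1 ++ M2).length ≤ N := by
          have := hlenM; simp at this ⊢; omega
        have hcap' : ∀ j, loadU (M1 ++ M2) j + loadV (M1 ++ M2) j ≤ c j := fun j => by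
          have := hcap j
          simp only [loadU_append, loadV_append, loadU_cons, loadV_cons, loadU_nil,
            loadV_nil] at this ⊢
          omega
        have ihL' := ih (M1 ++ M2) hlen' pu' pv' hcap'
        have hsL : lL s ≤ loadU ((M1 ++ s :: M2) ++ [e]) (lV e) := by
          rw [← hsv]; exact single_le_loadU (by simp)
        have hse : lL s + lL e ≤ c (lV e) := by have := hcap (lV e); omega
        have hgap : c (lV e) + 2 ≤ c (lU e) := by
          have h1 := hmono hgt
          have h2 := hodd (lU e); have h3 := hodd (lV e); omega
        have hnotin1 : lU e ∉ used (M1 ++ M2) := by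
          rw [mem_used_iff]
          rintro ⟨f, hf, h | h⟩
          · have hfM : f ∈ M1 ++ s :: M2 := hsub.mem hf
            have := huMe' f hfM; omega
          · have hfM : f ∈ M1 ++ s :: M2 := hsub.mem hf
            have := hvMe' f hfM; omega
        have hnotin2 : lV e ∉ used (M1 ++ M2) := by
          rw [mem_used_iff]
          rintro ⟨f, hf, h | h⟩
          · rcases List.mem_append.mp hf with h1 | h2
            · have := hu12 f h1 s (by simp); omega
            · have := hsM2 f h2; omega
          · have hfM : f ∈ M1 ++ s :: M2 := hsub.mem hf
            have := hvMe' f hfM; omega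
        have hne : lU e ≠ lV e := ne_of_gt hgt
        set X : Finset ℕ := insert (lU e) (insert (lV e) (used (M1 ++ M2))) with hX
        have hXsub : X ⊆ used ((M1 ++ s :: M2) ++ [e]) := by
          intro j hj
          rw [hmemU j]
          simp only [hX, Finset.mem_insert] at hj
          rcases hj with rfl | rfl | hj
          · exact Or.inl rfl
          · exact Or.inr (Or.inl rfl)
          · right; right
            rw [mem_used_iff] at hj ⊢
            obtain ⟨f, hf, hor⟩ := hj
            exact ⟨f, hsub.mem hf, hor⟩
        have hcardX : X.card = 2 + (used (M1 ++ M2)).card := by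
          rw [Finset.card_insert_of_notMem (by simp [hne, hnotin1]),
            Finset.card_insert_of_notMem hnotin2]
          omega
        have hsumX : ∑ j ∈ X, c j = c (lU e) + (c (lV e) + ∑ j ∈ used (M1 ++ M2), c j) := by
          rw [Finset.sum_insert (by simp [hne, hnotin1]), Finset.sum_insert hnotin2]
        have htot : tot ((M1 ++ s :: M2) ++ [e]) = tot (M1 ++ M2) + lL s + lL e := by
          simp; omega
        apply extend c hc1 hXsub
        rw [hcardX, hsumX, htot]
        omega
      · push_neg at hs
        have hse : lL e ≤ c (lV e) := by have := hcap (lV e); omega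
        have hgap : c (lV e) + 2 ≤ c (lU e) := by
          have h1 := hmono hgt
          have h2 := hodd (lU e); have h3 := hodd (lV e); omega
        have ihM := ih M hlenM huM hvM hcapM
        have hnotin1 : lU e ∉ used M := by
          rw [mem_used_iff]
          rintro ⟨f, hf, h | h⟩
          · have := huMe' f hf; omega
          · have := hvMe' f hf; omega
        have hnotin2 : lV e ∉ used M := by
          rw [mem_used_iff]
          rintro ⟨f, hf, h | h⟩
          · exact hs f hf h
          · have := hvMe' f hf; omega
        have hne : lU e ≠ lV e := ne_of_gt hgt
        set X : Finset ℕ := insert (lU e) (insert (lV e) (used M)) with hX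
        have hXsub : X ⊆ used (M ++ [e]) := by
          intro j hj
          rw [hmemU j]
          simp only [hX, Finset.mem_insert] at hj
          tauto
        have hcardX : X.card = 2 + (used M).card := by
          rw [Finset.card_insert_of_notMem (by simp [hne, hnotin1]),
            Finset.card_insert_of_notMem hnotin2]
          omega
        have hsumX : ∑ j ∈ X, c j = c (lU e) + (c (lV e) + ∑ j ∈ used M, c j) := by
          rw [Finset.sum_insert (by simp [hne, hnotin1]), Finset.sum_insert hnotin2]
        have htot : tot (M ++ [e]) = tot M + lL e := by simp
        apply extend c hc1 hXsub
        rw [hcardX, hsumX, htot]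
        omega


lemma cnt_succ (f : ℕ → ℕ) (w j : ℕ) :
    ((Finset.range (w + 1)).filter (fun i => f i = j)).card
      = ((Finset.range w).filter (fun i => f i = j)).card + (if f w = j then 1 else 0) := by
  rw [Finset.range_add_one, Finset.filter_insert]
  split
  · rw [Finset.card_insert_of_notMem (by simp)]
  · rfl

lemma lU_mk' (a b c : ℕ) : lU ((a, b, c) : Run) = a := by unfold lU; rfl
lemma lV_mk' (a b c : ℕ) : lV ((a, b, c) : Run) = b := by unfold lV; rfl

lemma runs_exist (A B : ℕ → ℕ) :
    ∀ w, (∀ i, i + 1 < w → A i ≤ A (i + 1)) → (∀ i, i + 1 < w → B i ≤ B (i + 1)) →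
    (∀ i, i + 1 < w → (A i = A (i + 1) ↔ B i = B (i + 1))) →
    ∃ L : List Run,
      L.Pairwise (fun x y => lU x < lU y) ∧
      L.Pairwise (fun x y => lV x < lV y) ∧
      tot L = w ∧
      (∀ j, loadU L j = ((Finset.range w).filter (fun i => A i = j)).card) ∧
      (∀ j, loadV L j = ((Finset.range w).filter (fun i => B i = j)).card) ∧
      (∀ e ∈ L, 1 ≤ lL e) ∧
      (w ≠ 0 → ∃ M ℓ, L = M ++ [((A (w - 1), B (w - 1), ℓ) : Run)]) := by
  intro w
  induction w with
  | zero =>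
    intro _ _ _
    exact ⟨[], by simp, by simp, by simp, by simp [loadU], by simp [loadV], by simp,
      fun h => absurd rfl h⟩
  | succ w ihw =>
    intro hA hB hs
    have hA' : ∀ i, i + 1 < w → A i ≤ A (i + 1) := fun i hi => hA i (by omega)
    have hB' : ∀ i, i + 1 < w → B i ≤ B (i + 1) := fun i hi => hB i (by omega)
    have hs' : ∀ i, i + 1 < w → (A i = A (i + 1) ↔ B i = B (i + 1)) :=
      fun i hi => hs i (by omega)
    obtain ⟨L, pu, pv, htot, hlU, hlV, hpos, hlast⟩ := ihw hA' hB' hs'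
    rcases Nat.eq_zero_or_pos w with rfl | hw
    · refine ⟨[((A 0, B 0, 1) : Run)], by simp, by simp, by simp [tot, lL], ?_, ?_, ?_, ?_⟩
      · intro j
        by_cases h : A 0 = j <;>
          simp [loadU, lU, lL, Finset.range_one, Finset.filter_singleton, h]
      · intro j
        by_cases h : B 0 = j <;>
          simp [loadV, lV, lL, Finset.range_one, Finset.filter_singleton, h]
      · intro e he
        simp at he
        subst he
        simp [lL]
      · intro _
        exact ⟨[], 1, by simp⟩
    · obtain ⟨M, ℓ, rfl⟩ := hlast (by omega)
      have hw1 : w - 1 + 1 = w := by omega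
      by_cases hAe : A (w - 1) = A w
      · have hBe : B (w - 1) = B w := by
          have := hs (w - 1) (by omega)
          rw [hw1] at this
          exact this.mp hAe
        refine ⟨M ++ [((A w, B w, ℓ + 1) : Run)], ?_, ?_, ?_, ?_, ?_, ?_, ?_⟩
        · rw [← hAe, ← hBe]
          obtain ⟨p1, -, p12⟩ := List.pairwise_append.mp pu
          refine List.pairwise_append.mpr ⟨p1, by simp, ?_⟩
          intro x hx y hy
          have := p12 x hx ((A (w-1), B (w-1), ℓ) : Run) (by simp)
          simp only [List.mem_singleton] at hy
          subst hy
          exact this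
        · rw [← hAe, ← hBe]
          obtain ⟨p1, -, p12⟩ := List.pairwise_append.mp pv
          refine List.pairwise_append.mpr ⟨p1, by simp, ?_⟩
          intro x hx y hy
          have := p12 x hx ((A (w-1), B (w-1), ℓ) : Run) (by simp)
          simp only [List.mem_singleton] at hy
          subst hy
          exact this
        · have := htot
          simp [tot, lL] at this ⊢
          omega
        · intro j
          have hold := hlU j
          rw [cnt_succ]
          simp only [loadU_append, loadU_cons, loadU_nil, lU_mk', lL] at hold ⊢
          by_cases hj : A w = j
          · simp only [if_pos hj] at *
            simp only [if_pos (hAe.trans hj)] at hold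
            omega
          · simp only [if_neg hj] at *
            simp only [if_neg (fun h => hj (hAe ▸ h))] at hold
            omega
        · intro j
          have hold := hlV j
          rw [cnt_succ]
          simp only [loadV_append, loadV_cons, loadV_nil, lV_mk', lL] at hold ⊢
          by_cases hj : B w = j
          · simp only [if_pos hj] at *
            simp only [if_pos (hBe.trans hj)] at hold
            omega
          · simp only [if_neg hj] at *
            simp only [if_neg (fun h => hj (hBe ▸ h))] at hold
            omega
        · intro e he
          rcases List.mem_append.mp he with h | h
          · exact hpos e (List.mem_append.mpr (Or.inl h))
          · simp at h
            subst h
            simp [lL]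
        · intro _
          exact ⟨M, ℓ + 1, by simp⟩
      · have hAlt : A (w - 1) < A w := by
          have := hA (w - 1) (by omega)
          rw [hw1] at this
          omega
        have hBlt : B (w - 1) < B w := by
          have h1 := hB (w - 1) (by omega)
          have h2 := hs (w - 1) (by omega)
          rw [hw1] at h1 h2
          rcases Nat.lt_or_ge (B (w-1)) (B w) with h | h
          · exact h
          · have : B (w - 1) = B w := le_antisymm h1 h
            exact absurd (h2.mpr this) hAe
        have hallU : ∀ x ∈ M ++ [((A (w-1), B (w-1), ℓ) : Run)], lU x < A w := by
          intro x hx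
          rcases List.mem_append.mp hx with h | h
          · obtain ⟨-, -, p12⟩ := List.pairwise_append.mp pu
            have := p12 x h ((A (w-1), B (w-1), ℓ) : Run) (by simp)
            simp only [lU] at this ⊢
            omega
          · simp at h
            subst h
            simpa [lU] using hAlt
        have hallV : ∀ x ∈ M ++ [((A (w-1), B (w-1), ℓ) : Run)], lV x < B w := by
          intro x hx
          rcases List.mem_append.mp hx with h | h
          · obtain ⟨-, -, p12⟩ := List.pairwise_append.mp pv
            have := p12 x h ((A (w-1), B (w-1), ℓ) : Run) (by simp)
            simp only [lV] at this ⊢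
            omega
          · simp at h
            subst h
            simpa [lV] using hBlt
        refine ⟨(M ++ [((A (w-1), B (w-1), ℓ) : Run)]) ++ [((A w, B w, 1) : Run)],
          ?_, ?_, ?_, ?_, ?_, ?_, ?_⟩
        · refine List.pairwise_append.mpr ⟨pu, by simp, ?_⟩
          intro x hx y hy
          simp only [List.mem_singleton] at hy
          subst hy
          exact hallU x hx
        · refine List.pairwise_append.mpr ⟨pv, by simp, ?_⟩
          intro x hx y hy
          simp only [List.mem_singleton] at hy
          subst hy
          exact hallV x hx
        · simp [tot, lL] at htot ⊢
          omega
        · intro j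
          have hold := hlU j
          rw [cnt_succ]
          simp only [loadU_append, loadU_cons, loadU_nil, lU_mk', lL] at hold ⊢
          by_cases hj : A w = j
          · simp only [if_pos hj] at *
            simp only [if_neg (show ¬ A (w - 1) = j by omega)] at *
            omega
          · simp only [if_neg hj] at *
            by_cases hj2 : A (w - 1) = j
            · simp only [if_pos hj2] at *
              omega
            · simp only [if_neg hj2] at *
              omega
        · intro j
          have hold := hlV j
          rw [cnt_succ]
          simp only [loadV_append, loadV_cons, loadV_nil, lV_mk', lL] at hold ⊢
          by_cases hj : B w = j
          · simp only [if_pos hj] at *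
            simp only [if_neg (show ¬ B (w - 1) = j by omega)] at *
            omega
          · simp only [if_neg hj] at *
            by_cases hj2 : B (w - 1) = j
            · simp only [if_pos hj2] at *
              omega
            · simp only [if_neg hj2] at *
              omega
        · intro e he
          rcases List.mem_append.mp he with h | h
          · exact hpos e h
          · simp at h
            subst h
            simp [lL]
        · intro _
          exact ⟨M ++ [((A (w-1), B (w-1), ℓ) : Run)], 1, by simp⟩


/-! ### The permutation construction -/

def kk (n : ℕ) : ℕ := if Nat.sqrt n % 2 = n % 2 then Nat.sqrt n else Nat.sqrt n - 1

def capB (n j : ℕ) : ℕ := 2 * j + 1 + (if kk n - 1 ≤ j then n - kk n ^ 2 else 0)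

def beta (n p : ℕ) : ℕ := min (Nat.sqrt p) (kk n - 1)

def ff (n p : ℕ) : ℕ :=
  if Nat.sqrt p < kk n - 1 then n - (Nat.sqrt p + 1) ^ 2 + (p - Nat.sqrt p ^ 2)
  else p - (kk n - 1) ^ 2

lemma kk_le (n : ℕ) : kk n ≤ Nat.sqrt n := by
  unfold kk; split <;> omega

lemma kk_ge (n : ℕ) : Nat.sqrt n - 1 ≤ kk n := by
  unfold kk; split <;> omega

lemma kk_parity (n : ℕ) (hs : 1 ≤ Nat.sqrt n) : kk n % 2 = n % 2 := by
  unfold kk; split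
  · assumption
  · omega

lemma kk_sq_le (n : ℕ) : kk n ^ 2 ≤ n :=
  le_trans (Nat.pow_le_pow_left (kk_le n) 2) (Nat.sqrt_le' n)

lemma sqrt_char (p j : ℕ) : Nat.sqrt p = j ↔ j ^ 2 ≤ p ∧ p < (j + 1) ^ 2 := by
  constructor
  · rintro rfl
    exact ⟨Nat.sqrt_le' p, Nat.lt_succ_sqrt' p⟩
  · rintro ⟨h1, h2⟩
    have ha : j ≤ Nat.sqrt p := Nat.le_sqrt'.mpr h1
    have hb : Nat.sqrt p < j + 1 := by
      by_contra hc
      push_neg at hc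
      have := le_trans (Nat.pow_le_pow_left hc 2) (Nat.sqrt_le' p)
      omega
    omega

lemma beta_eq_iff (n p j : ℕ) :
    beta n p = j ↔
      (j < kk n - 1 ∧ j ^ 2 ≤ p ∧ p < (j + 1) ^ 2) ∨
      (j = kk n - 1 ∧ (kk n - 1) ^ 2 ≤ p) := by
  unfold beta
  constructor
  · intro h
    rcases le_or_gt (Nat.sqrt p) (kk n - 1) with hc | hc
    · have hj : Nat.sqrt p = j := by omega
      rcases Nat.lt_or_ge j (kk n - 1) with h2 | h2
      · exact Or.inl ⟨h2, (sqrt_char p j).mp hj⟩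
      · have hj2 : j = kk n - 1 := by omega
        refine Or.inr ⟨hj2, ?_⟩
        have := Nat.sqrt_le' p
        calc (kk n - 1) ^ 2 = j ^ 2 := by rw [hj2]
          _ ≤ p := by rw [← hj]; exact Nat.sqrt_le' p
    · have hj : j = kk n - 1 := by omega
      refine Or.inr ⟨hj, ?_⟩
      have h1 : kk n - 1 ≤ Nat.sqrt p := le_of_lt hc
      exact le_trans (Nat.pow_le_pow_left h1 2) (Nat.sqrt_le' p)
  · rintro (⟨h1, h2, h3⟩ | ⟨h1, h2⟩)
    · have : Nat.sqrt p = j := (sqrt_char p j).mpr ⟨h2, h3⟩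
      omega
    · have : kk n - 1 ≤ Nat.sqrt p := Nat.le_sqrt'.mpr h2
      omega

lemma beta_lt (n p : ℕ) (h : 1 ≤ kk n) : beta n p < kk n := by
  unfold beta; omega

lemma beta_mono (n : ℕ) {p q : ℕ} (h : p ≤ q) : beta n p ≤ beta n q := by
  unfold beta
  have := Nat.sqrt_le_sqrt h
  omega

lemma fiber_eq (n j : ℕ) (hk : 1 ≤ kk n) (hj : j < kk n) :
    (Finset.range n).filter (fun p => beta n p = j)
      = Finset.Ico (j ^ 2) (if j < kk n - 1 then (j + 1) ^ 2 else n) := by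
  have hkn : kk n ^ 2 ≤ n := kk_sq_le n
  have e1 : j < kk n - 1 → (j + 1) ^ 2 ≤ (kk n - 1) ^ 2 :=
    fun h => Nat.pow_le_pow_left (by omega) 2
  have e2 : (kk n - 1) ^ 2 ≤ kk n ^ 2 := Nat.pow_le_pow_left (by omega) 2
  have e3 : j ^ 2 ≤ (j + 1) ^ 2 := Nat.pow_le_pow_left (by omega) 2
  ext p
  have hmem := beta_eq_iff n p j
  simp only [Finset.mem_filter, Finset.mem_range, Finset.mem_Ico, hmem]
  rcases Nat.lt_or_ge j (kk n - 1) with hlt | hge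
  · rw [if_pos hlt]
    omega
  · rw [if_neg (by omega)]
    have hj1 : j = kk n - 1 := by omega
    subst hj1
    omega

lemma fiber_card (n j : ℕ) (hk : 1 ≤ kk n) (hj : j < kk n) :
    ((Finset.range n).filter (fun p => beta n p = j)).card = capB n j := by
  rw [fiber_eq n j hk hj, Nat.card_Ico]
  unfold capB
  have hkn : kk n ^ 2 ≤ n := kk_sq_le n
  split
  · rename_i hlt
    rw [if_neg (by omega)]
    have : (j + 1) ^ 2 = j ^ 2 + 2 * j + 1 := by ring
    omega
  · rename_i hge
    have hj1 : j = kk n - 1 := by omega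
    rw [if_pos (by omega)]
    subst hj1
    have h1 : (kk n - 1) ^ 2 + 2 * (kk n - 1) + 1 = kk n ^ 2 := by
      have : kk n - 1 + 1 = kk n := by omega
      calc (kk n - 1) ^ 2 + 2 * (kk n - 1) + 1 = (kk n - 1 + 1) ^ 2 := by ring
        _ = kk n ^ 2 := by rw [this]
    omega

lemma capB_odd (n j : ℕ) (hs : 1 ≤ Nat.sqrt n) : capB n j % 2 = 1 := by
  have hp := kk_parity n hs
  have hkn : kk n ^ 2 ≤ n := kk_sq_le n
  have hsq : kk n ^ 2 % 2 = kk n % 2 := by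
    rcases Nat.even_or_odd (kk n) with h | h
    · obtain ⟨r, hr⟩ := h
      have : kk n ^ 2 = 2 * (r * (r + r)) := by rw [hr]; ring
      omega
    · obtain ⟨r, hr⟩ := h
      have : kk n ^ 2 = 2 * (2 * r * r + 2 * r) + 1 := by rw [hr]; ring
      omega
  unfold capB
  split <;> omega

lemma capB_mono (n : ℕ) : StrictMono (capB n) := by
  apply strictMono_nat_of_lt_succ
  intro j
  unfold capB
  rcases Nat.lt_or_ge j (kk n - 1) with h | h
  · rw [if_neg (by omega)]
    split <;> omega
  · rw [if_pos h, if_pos (by omega)]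
    omega

lemma sum_odds (m : ℕ) : ∑ j ∈ Finset.range m, (2 * j + 1) = m ^ 2 := by
  induction m with
  | zero => simp
  | succ m ih =>
    rw [Finset.sum_range_succ, ih]
    ring

lemma capB_sum (n : ℕ) (hk : 1 ≤ kk n) :
    ∑ j ∈ Finset.range (kk n), capB n j = n := by
  have hkn : kk n ^ 2 ≤ n := kk_sq_le n
  have hk1 : kk n - 1 + 1 = kk n := by omega
  rw [← hk1, Finset.sum_range_succ]
  have h1 : ∀ j ∈ Finset.range (kk n - 1), capB n j = 2 * j + 1 := by
    intro j hj
    simp only [Finset.mem_range] at hj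
    unfold capB
    rw [if_neg (by omega)]
  rw [Finset.sum_congr rfl h1, sum_odds]
  unfold capB
  rw [if_pos (le_refl _)]
  have h2 : (kk n - 1) ^ 2 + (2 * (kk n - 1) + 1) = kk n ^ 2 := by
    calc (kk n - 1) ^ 2 + (2 * (kk n - 1) + 1) = (kk n - 1 + 1) ^ 2 := by ring
      _ = kk n ^ 2 := by rw [hk1]
  omega


lemma ff_lt (n p : ℕ) (hp : p < n) : ff n p < n := by
  have h1 : Nat.sqrt p ^ 2 ≤ p := Nat.sqrt_le' p
  have h2 : p < (Nat.sqrt p + 1) ^ 2 := Nat.lt_succ_sqrt' p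
  have hkn : kk n ^ 2 ≤ n := kk_sq_le n
  unfold ff
  split
  · rename_i hc
    have h3 : (Nat.sqrt p + 1) ^ 2 ≤ (kk n - 1) ^ 2 := Nat.pow_le_pow_left (by omega) 2
    have h4 : (kk n - 1) ^ 2 ≤ kk n ^ 2 := Nat.pow_le_pow_left (by omega) 2
    omega
  · omega

lemma ff_order (n p q : ℕ) (hpq : p < q) (hq : q < n) :
    (beta n p = beta n q → ff n p < ff n q) ∧ (beta n p ≠ beta n q → ff n q < ff n p) := by
  have h1 : Nat.sqrt p ^ 2 ≤ p := Nat.sqrt_le' p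
  have h2 : p < (Nat.sqrt p + 1) ^ 2 := Nat.lt_succ_sqrt' p
  have h3 : Nat.sqrt q ^ 2 ≤ q := Nat.sqrt_le' q
  have h4 : q < (Nat.sqrt q + 1) ^ 2 := Nat.lt_succ_sqrt' q
  have h5 : Nat.sqrt p ≤ Nat.sqrt q := Nat.sqrt_le_sqrt (le_of_lt hpq)
  have hkn : kk n ^ 2 ≤ n := kk_sq_le n
  have g1 : Nat.sqrt p + 1 ≤ Nat.sqrt q → (Nat.sqrt p + 1) ^ 2 ≤ Nat.sqrt q ^ 2 :=
    fun h => Nat.pow_le_pow_left h 2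
  have g2 : Nat.sqrt p + 1 ≤ kk n - 1 → (Nat.sqrt p + 1) ^ 2 ≤ (kk n - 1) ^ 2 :=
    fun h => Nat.pow_le_pow_left h 2
  have g3 : Nat.sqrt q + 1 ≤ kk n - 1 → (Nat.sqrt q + 1) ^ 2 ≤ (kk n - 1) ^ 2 :=
    fun h => Nat.pow_le_pow_left h 2
  have g4 : (kk n - 1) ^ 2 ≤ kk n ^ 2 := Nat.pow_le_pow_left (by omega) 2
  have g6 : kk n - 1 ≤ Nat.sqrt p → (kk n - 1) ^ 2 ≤ Nat.sqrt p ^ 2 :=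
    fun h => Nat.pow_le_pow_left h 2
  have g7 : kk n - 1 ≤ Nat.sqrt q → (kk n - 1) ^ 2 ≤ Nat.sqrt q ^ 2 :=
    fun h => Nat.pow_le_pow_left h 2
  have g8 : Nat.sqrt p = Nat.sqrt q → Nat.sqrt p ^ 2 = Nat.sqrt q ^ 2 :=
    fun h => by rw [h]
  have g9 : Nat.sqrt p = Nat.sqrt q → (Nat.sqrt p + 1) ^ 2 = (Nat.sqrt q + 1) ^ 2 :=
    fun h => by rw [h]
  have g10 : Nat.sqrt p ^ 2 ≤ (Nat.sqrt p + 1) ^ 2 := Nat.pow_le_pow_left (by omega) 2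
  have g11 : Nat.sqrt q ^ 2 ≤ (Nat.sqrt q + 1) ^ 2 := Nat.pow_le_pow_left (by omega) 2
  unfold beta ff
  split <;> split <;> omega

end WT

/-- `π` contains a pair of weak twins of length `w`: two subsequences on disjoint
position sets, of length `w` each, whose consecutive elements rise and fall in
the same way. -/
def HasWeakTwins {n : ℕ} (π : Equiv.Perm (Fin n)) (w : ℕ) : Prop :=
  ∃ a b : Fin w → Fin n, StrictMono a ∧ StrictMono b ∧ (∀ i j, a i ≠ b j) ∧
    ∀ i : ℕ, ∀ h : i + 1 < w,
      (π (a ⟨i, by omega⟩) < π (a ⟨i + 1, h⟩) ↔ π (b ⟨i, by omega⟩) < π (b ⟨i + 1, h⟩))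

open WT in
theorem main_bound (n : ℕ) (hn : 16 ≤ n) :
    ∃ π : Equiv.Perm (Fin n), ∀ w : ℕ, HasWeakTwins π w → 2 * w + kk n ≤ n := by
  have hs4 : 4 ≤ Nat.sqrt n := Nat.le_sqrt'.mpr (by omega)
  have hk1 : 1 ≤ kk n := by have := kk_ge n; omega
  have hkn : kk n ≤ n := le_trans (kk_le n) (Nat.sqrt_le_self n)
  set g : Fin n → Fin n := fun p => ⟨ff n p.val, ff_lt n p.val p.isLt⟩ with hg
  have hinj : Function.Injective g := by
    intro p q h
    have hval : ff n p.val = ff n q.val := congrArg Fin.val h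
    rcases lt_trichotomy p.val q.val with hc | hc | hc
    · have := ff_order n p.val q.val hc q.isLt
      rcases eq_or_ne (beta n p.val) (beta n q.val) with he | he
      · have := this.1 he; omega
      · have := this.2 he; omega
    · exact Fin.ext hc
    · have := ff_order n q.val p.val hc p.isLt
      rcases eq_or_ne (beta n q.val) (beta n p.val) with he | he
      · have := this.1 he; omega
      · have := this.2 he; omega
  refine ⟨Equiv.ofBijective g (Finite.injective_iff_bijective.mp hinj), ?_⟩
  intro w hwt
  obtain ⟨a, b, ha, hb, hdis, hpat⟩ := hwt
  rcases Nat.eq_zero_or_pos w with rfl | hw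
  · omega
  set A : ℕ → ℕ := fun i => beta n (a ⟨min i (w - 1), by omega⟩).val with hAdef
  set B : ℕ → ℕ := fun i => beta n (b ⟨min i (w - 1), by omega⟩).val with hBdef
  have hmk : ∀ i (h : i < w), (⟨min i (w - 1), by omega⟩ : Fin w) = ⟨i, h⟩ := by
    intro i h
    exact Fin.ext (by simp; omega)
  have hAeq : ∀ i (h : i < w), A i = beta n (a ⟨i, h⟩).val := by
    intro i h
    simp only [hAdef]
    rw [hmk i h]
  have hBeq : ∀ i (h : i < w), B i = beta n (b ⟨i, h⟩).val := by
    intro i h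
    simp only [hBdef]
    rw [hmk i h]
  have haval : ∀ i (h : i + 1 < w), (a ⟨i, by omega⟩).val < (a ⟨i + 1, h⟩).val := by
    intro i h
    exact ha (by exact Fin.mk_lt_mk.mpr (by omega))
  have hbval : ∀ i (h : i + 1 < w), (b ⟨i, by omega⟩).val < (b ⟨i + 1, h⟩).val := by
    intro i h
    exact hb (by exact Fin.mk_lt_mk.mpr (by omega))
  have hA : ∀ i, i + 1 < w → A i ≤ A (i + 1) := by
    intro i h
    rw [hAeq i (by omega), hAeq (i + 1) h]
    exact beta_mono n (le_of_lt (haval i h))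
  have hB : ∀ i, i + 1 < w → B i ≤ B (i + 1) := by
    intro i h
    rw [hBeq i (by omega), hBeq (i + 1) h]
    exact beta_mono n (le_of_lt (hbval i h))
  have hsync : ∀ i, i + 1 < w → (A i = A (i + 1) ↔ B i = B (i + 1)) := by
    intro i h
    have hp := hpat i h
    have hordA := ff_order n (a ⟨i, by omega⟩).val (a ⟨i + 1, h⟩).val (haval i h)
      (a ⟨i + 1, h⟩).isLt
    have hordB := ff_order n (b ⟨i, by omega⟩).val (b ⟨i + 1, h⟩).val (hbval i h)
      (b ⟨i + 1, h⟩).isLt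
    have hgA : ∀ x : Fin w, (Equiv.ofBijective g (Finite.injective_iff_bijective.mp hinj))
        (a x) = g (a x) := fun _ => rfl
    rw [hAeq i (by omega), hAeq (i + 1) h, hBeq i (by omega), hBeq (i + 1) h]
    have hltA : (g (a ⟨i, by omega⟩) < g (a ⟨i + 1, h⟩)) ↔
        ff n (a ⟨i, by omega⟩).val < ff n (a ⟨i + 1, h⟩).val := Iff.rfl
    have hltB : (g (b ⟨i, by omega⟩) < g (b ⟨i + 1, h⟩)) ↔
        ff n (b ⟨i, by omega⟩).val < ff n (b ⟨i + 1, h⟩).val := Iff.rfl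
    simp only [Equiv.ofBijective_apply] at hp
    rw [hltA, hltB] at hp
    constructor
    · intro he
      by_contra hne
      have := hordB.2 hne
      have := hordA.1 he
      omega
    · intro he
      by_contra hne
      have := hordA.2 hne
      have := hordB.1 he
      omega
  obtain ⟨L, pu, pv, htot, hlU, hlV, hpos, -⟩ := runs_exist A B w hA hB hsync
  have hAlt : ∀ i, A i < kk n := fun i => beta_lt n _ hk1
  have hBlt : ∀ i, B i < kk n := fun i => beta_lt n _ hk1
  have hcap : ∀ j, loadU L j + loadV L j ≤ capB n j := by
    intro j
    rw [hlU j, hlV j]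
    rcases Nat.lt_or_ge j (kk n) with hj | hj
    · -- counting in block j
      set SA := (Finset.range w).filter (fun i => A i = j) with hSA
      set SB := (Finset.range w).filter (fun i => B i = j) with hSB
      set FA : ℕ → ℕ := fun i => (a ⟨min i (w - 1), by omega⟩).val with hFA
      set FB : ℕ → ℕ := fun i => (b ⟨min i (w - 1), by omega⟩).val with hFB
      have hinjA : Set.InjOn FA SA := by
        intro i hi i' hi' he
        simp only [hSA, Finset.coe_filter, Set.mem_setOf_eq, Finset.mem_range] at hi hi'
        have h1 : (⟨min i (w - 1), by omega⟩ : Fin w) = ⟨min i' (w - 1), by omega⟩ :=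
          ha.injective (Fin.ext he)
        have := Fin.mk.injEq .. ▸ h1
        omega
      have hinjB : Set.InjOn FB SB := by
        intro i hi i' hi' he
        simp only [hSB, Finset.coe_filter, Set.mem_setOf_eq, Finset.mem_range] at hi hi'
        have h1 : (⟨min i (w - 1), by omega⟩ : Fin w) = ⟨min i' (w - 1), by omega⟩ :=
          hb.injective (Fin.ext he)
        have := Fin.mk.injEq .. ▸ h1
        omega
      set fib := (Finset.range n).filter (fun p => beta n p = j) with hfib
      have hsubA : SA.image FA ⊆ fib := by
        intro p hp
        obtain ⟨i, hi, rfl⟩ := Finset.mem_image.mp hp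
        simp only [hSA, Finset.mem_filter, Finset.mem_range] at hi
        simp only [hfib, Finset.mem_filter, Finset.mem_range]
        exact ⟨(a ⟨min i (w - 1), by omega⟩).isLt, hi.2⟩
      have hsubB : SB.image FB ⊆ fib := by
        intro p hp
        obtain ⟨i, hi, rfl⟩ := Finset.mem_image.mp hp
        simp only [hSB, Finset.mem_filter, Finset.mem_range] at hi
        simp only [hfib, Finset.mem_filter, Finset.mem_range]
        exact ⟨(b ⟨min i (w - 1), by omega⟩).isLt, hi.2⟩
      have hdisj : Disjoint (SA.image FA) (SB.image FB) := by
        rw [Finset.disjoint_left]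
        intro p hpA hpB
        obtain ⟨i, hi, he1⟩ := Finset.mem_image.mp hpA
        obtain ⟨i', hi', he2⟩ := Finset.mem_image.mp hpB
        exact hdis _ _ (Fin.ext (he1.trans he2.symm))
      have hcardA : (SA.image FA).card = SA.card := Finset.card_image_of_injOn hinjA
      have hcardB : (SB.image FB).card = SB.card := Finset.card_image_of_injOn hinjB
      have hun : (SA.image FA ∪ SB.image FB).card = SA.card + SB.card := by
        rw [Finset.card_union_of_disjoint hdisj, hcardA, hcardB]
      have hle : (SA.image FA ∪ SB.image FB).card ≤ fib.card :=
        Finset.card_le_card (Finset.union_subset hsubA hsubB)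
      rw [hfib] at hle
      rw [fiber_card n j hk1 hj] at hle
      omega
    · -- block j is out of range, counts are 0
      have hA0 : (Finset.range w).filter (fun i => A i = j) = ∅ := by
        apply Finset.filter_eq_empty_iff.mpr
        intro i _
        have := hAlt i
        omega
      have hB0 : (Finset.range w).filter (fun i => B i = j) = ∅ := by
        apply Finset.filter_eq_empty_iff.mpr
        intro i _
        have := hBlt i
        omega
      rw [hA0, hB0]
      simp
  have hkey := key_aux (capB n) (capB_mono n) (fun j => capB_odd n j (by omega))
    L.length L (le_refl _) pu pv hcap
  have hused : used L ⊆ Finset.range (kk n) := by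
    intro j hj
    rw [mem_used_iff] at hj
    obtain ⟨e, he, hor⟩ := hj
    have hL1 : 1 ≤ lL e := hpos e he
    rw [Finset.mem_range]
    rcases hor with rfl | rfl
    · have h1 := single_le_loadU he
      rw [hlU (lU e)] at h1
      have : ((Finset.range w).filter (fun i => A i = lU e)).Nonempty := by
        rw [← Finset.card_pos]; omega
      obtain ⟨i, hi⟩ := this
      simp only [Finset.mem_filter] at hi
      have := hAlt i
      omega
    · have h1 := single_le_loadV he
      rw [hlV (lV e)] at h1
      have : ((Finset.range w).filter (fun i => B i = lV e)).Nonempty := by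
        rw [← Finset.card_pos]; omega
      obtain ⟨i, hi⟩ := this
      simp only [Finset.mem_filter] at hi
      have := hBlt i
      omega
  have hfin := extend (capB n) (fun j => by have := capB_odd n j (by omega); omega)
    hused (tot L) hkey
  rw [capB_sum n hk1, Finset.card_range, htot] at hfin
  omega

/-- Upper bound: there is `c > 0` such that for all large `n`, some permutation of `[n]`
has no weak twins of length greater than `n/2 - c n^{1/3}`. -/
theorem stmt_5 : ∃ c : ℝ, 0 < c ∧ ∃ n₀ : ℕ, ∀ n : ℕ, n₀ ≤ n →
    ∃ π : Equiv.Perm (Fin n), ∀ w : ℕ, HasWeakTwins π w →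
      (w : ℝ) ≤ (n : ℝ) / 2 - c * (n : ℝ) ^ ((1 : ℝ) / 3) := by
  refine ⟨1/4, by norm_num, 4096, ?_⟩
  intro n hn
  obtain ⟨π, hπ⟩ := main_bound n (by omega)
  refine ⟨π, ?_⟩
  intro w hwt
  have h2w := hπ w hwt
  have hs4 : 4 ≤ Nat.sqrt n := Nat.le_sqrt'.mpr (by omega)
  have hk : Nat.sqrt n - 1 ≤ WT.kk n := WT.kk_ge n
  have hnR : (4096:ℝ) ≤ (n:ℝ) := by exact_mod_cast hn
  have hn0 : (0:ℝ) < n := by linarith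
  set x := (n:ℝ) ^ ((1:ℝ)/3) with hxdef
  set y := (n:ℝ) ^ ((1:ℝ)/6) with hydef
  have hxy : Real.sqrt n = x * y := by
    rw [Real.sqrt_eq_rpow, hxdef, hydef, ← Real.rpow_add hn0]
    norm_num
  have hy2 : (2:ℝ) ≤ y := by
    have h1 : ((4096:ℝ)) ^ ((1:ℝ)/6) ≤ y := Real.rpow_le_rpow (by norm_num) hnR (by norm_num)
    have h2 : ((4096:ℝ)) ^ ((1:ℝ)/6) = 4 := by
      rw [show (4096:ℝ) = (4:ℝ)^(6:ℕ) by norm_num, ← Real.rpow_natCast (4:ℝ) 6,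
        ← Real.rpow_mul (by norm_num)]
      norm_num
    linarith
  have hx2 : (2:ℝ) ≤ x := by
    have h1 : ((4096:ℝ)) ^ ((1:ℝ)/3) ≤ x := Real.rpow_le_rpow (by norm_num) hnR (by norm_num)
    have h2 : ((4096:ℝ)) ^ ((1:ℝ)/3) = 16 := by
      rw [show (4096:ℝ) = (16:ℝ)^(3:ℕ) by norm_num, ← Real.rpow_natCast (16:ℝ) 3,
        ← Real.rpow_mul (by norm_num)]
      norm_num
    linarith
  have hx0 : (0:ℝ) ≤ x := by positivity
  have hsq : Real.sqrt n ≤ (Nat.sqrt n : ℝ) + 1 := by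
    have h0 := Nat.lt_succ_sqrt' n
    have h1 : (n:ℝ) ≤ ((Nat.sqrt n : ℝ) + 1)^2 := by
      have h2 : (n:ℝ) ≤ ((Nat.sqrt n + 1 : ℕ) : ℝ)^2 := by
        exact_mod_cast le_of_lt h0
      push_cast at h2
      linarith
    calc Real.sqrt n ≤ Real.sqrt (((Nat.sqrt n : ℝ) + 1)^2) := Real.sqrt_le_sqrt h1
      _ = (Nat.sqrt n : ℝ) + 1 := Real.sqrt_sq (by positivity)
  have hkR : Real.sqrt n - 2 ≤ ((WT.kk n : ℝ)) := by
    have h1 : ((Nat.sqrt n - 1 : ℕ) : ℝ) ≤ (WT.kk n : ℝ) := by exact_mod_cast hk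
    have h2 : ((Nat.sqrt n - 1 : ℕ) : ℝ) = (Nat.sqrt n : ℝ) - 1 := by
      have h3 : 1 ≤ Nat.sqrt n := by omega
      push_cast [h3]
      ring
    linarith
  have hwR : 2 * (w:ℝ) + (WT.kk n : ℝ) ≤ n := by exact_mod_cast h2w
  have hmul : 2 * x ≤ x * y := by nlinarith
  have hfinal : x ≤ 2 * (WT.kk n : ℝ) := by linarith
  linarith
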